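/- Let M ≥ 2 be a squarefree even integer such that −1 is a global norm from K = ℚ(√M). Then the fundamental unit ε_K has norm N(ε_K) = −1 if and only if m = 2 and m' = 2. -/

import Mathlib

open NumberField Polynomial

/-- The real quadratic field `K = ℚ(√M)`, realized inside `ℝ`. -/
noncomputable def Ksqrt (M : ℕ) : IntermediateField ℚ ℝ :=
  IntermediateField.adjoin ℚ {Real.sqrt M}

/-- `ε` is the fundamental unit of `ℚ(√M)`: `ε > 1` and `ε` is minimal among units `> 1`. -/
def IsFundamentalUnit (M : ℕ) (ε : (𝓞 (Ksqrt M))ˣ) : Prop :=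
  1 < (((ε : 𝓞 (Ksqrt M)) : Ksqrt M) : ℝ) ∧
    ∀ u : (𝓞 (Ksqrt M))ˣ, 1 < (((u : 𝓞 (Ksqrt M)) : Ksqrt M) : ℝ) →
      (((ε : 𝓞 (Ksqrt M)) : Ksqrt M) : ℝ) ≤ (((u : 𝓞 (Ksqrt M)) : Ksqrt M) : ℝ)

/-- With `ε_K = (u + v√M)/2` and `g = gcd(u+2, v)`, this is `m = gcd((u+2)/g, M)`,
the gcd of `A` and `M` where `ε_K + 1 = g(A + B√M)`. -/
def gcdm (M : ℕ) (u v : ℤ) : ℕ := Int.gcd ((u + 2) / (Int.gcd (u + 2) v : ℤ)) (M : ℤ)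

/-- With `ε_K = (u + v√M)/2` and `g' = gcd(u-2, v)`, this is `m' = gcd((u-2)/g', M)`,
the gcd of `A'` and `M` where `ε_K - 1 = g'(A' + B'√M)`. -/
def gcdm' (M : ℕ) (u v : ℤ) : ℕ := Int.gcd ((u - 2) / (Int.gcd (u - 2) v : ℤ)) (M : ℤ)

/-- Forward key lemma. -/
lemma keyF (M a b c c' : ℤ) (hM : (2:ℤ) ∣ M) (h : a^2 + 1 = M * b^2) (hb : 0 < b)
    (hcc' : c * c' = a^2 - 1) (hc : (2:ℤ) ∣ c) :
    Int.gcd (c / (Int.gcd c b : ℤ)) M = 2 := by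
  obtain ⟨M₁, rfl⟩ := hM
  have ha : a % 2 = 1 := by
    rcases Int.even_or_odd a with ⟨k, rfl⟩ | ⟨k, hk⟩
    · exfalso
      have h2 : (k+k)^2 + 1 = 2 * (M₁ * b^2) := by rw [h]; ring
      have hexp : (k+k)^2 = 4*k^2 := by ring
      omega
    · omega
  obtain ⟨k, hk⟩ : ∃ k, a = 2*k+1 := ⟨(a-1)/2, by omega⟩
  have hbodd : b % 2 = 1 := by
    rcases Int.even_or_odd b with ⟨b', rfl⟩ | ⟨b', hb'⟩
    · exfalso
      have h4 : a^2 + 1 = 4 * (2 * (M₁ * b'^2)) := by rw [h]; ring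
      have hsq : a^2 = 4*(k^2+k)+1 := by rw [hk]; ring
      omega
    · omega
  set d : ℕ := Int.gcd c b with hd
  have hdb : (d:ℤ) ∣ b := Int.gcd_dvd_right _ _
  have hdodd : ¬ ((2:ℤ) ∣ (d:ℤ)) := by
    intro h2d
    obtain ⟨t, ht⟩ := h2d.trans hdb
    omega
  set q : ℤ := c / (d:ℤ) with hq
  have hqd : q * (d:ℤ) = c := Int.ediv_mul_cancel (Int.gcd_dvd_left _ _)
  have h2q : (2:ℤ) ∣ q := by
    rcases (Int.prime_two.dvd_mul.mp (hqd ▸ hc)) with h' | h'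
    · exact h'
    · exact absurd h' hdodd
  set m : ℕ := Int.gcd q (2*M₁) with hm
  have h2m : (2:ℤ) ∣ (m:ℤ) := by
    rw [hm, Int.coe_gcd]; exact dvd_gcd h2q ⟨M₁, rfl⟩
  have hmq : (m:ℤ) ∣ q := Int.gcd_dvd_left _ _
  have hmM : (m:ℤ) ∣ 2*M₁ := Int.gcd_dvd_right _ _
  have hm2 : (m:ℤ) ∣ 2 := by
    have h1 : (m:ℤ) ∣ a^2 - 1 := (hmq.trans ⟨(d:ℤ), hqd.symm⟩).trans ⟨c', hcc'.symm⟩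
    have h2 : (m:ℤ) ∣ a^2 + 1 := h ▸ hmM.mul_right _
    have := Int.dvd_sub h2 h1
    simpa using this
  have : (m:ℤ) = 2 := Int.dvd_antisymm (by positivity) (by norm_num) hm2 h2m
  exact_mod_cast this

/-- 2-adic sublemma for the backward direction. -/
lemma keyB_aux (M c b₁ c₁ : ℤ) (hc : c = 2*c₁) (hc₁ : c₁ % 2 = 1) :
    Int.gcd (c / (Int.gcd c (2*b₁) : ℤ)) M ≠ 2 := by
  intro hcon
  subst hc
  have hgcd : Int.gcd (2*c₁) (2*b₁) = 2 * Int.gcd c₁ b₁ := by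
    rw [Int.gcd_mul_left]; rfl
  set d₁ : ℕ := Int.gcd c₁ b₁ with hd₁
  have hq : (2*c₁) / (Int.gcd (2*c₁) (2*b₁) : ℤ) = c₁ / (d₁:ℤ) := by
    rw [hgcd]
    push_cast
    exact Int.mul_ediv_mul_of_pos _ _ (by norm_num)
  rw [hq] at hcon
  set q := c₁ / (d₁:ℤ) with hqdef
  have hqd : q * (d₁:ℤ) = c₁ := Int.ediv_mul_cancel (Int.gcd_dvd_left _ _)
  have h2q : (2:ℤ) ∣ q := by
    have : ((Int.gcd q M : ℕ) : ℤ) ∣ q := Int.gcd_dvd_left _ _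
    rw [hcon] at this
    exact_mod_cast this
  obtain ⟨t, ht⟩ := h2q
  have : c₁ = 2*(t*(d₁:ℤ)) := by rw [← hqd, ht]; ring
  omega

/-- Backward key lemma. -/
lemma keyB (M a b : ℤ) (hM : (2:ℤ) ∣ M) (hM4 : ¬ ((4:ℤ) ∣ M)) (h : a^2 - 1 = M * b^2)
    (ha : 0 < a) (hb : 0 < b) :
    Int.gcd ((a+1) / (Int.gcd (a+1) b : ℤ)) M ≠ 2 ∨
    Int.gcd ((a-1) / (Int.gcd (a-1) b : ℤ)) M ≠ 2 := by
  have hM₁ : M % 4 = 2 := by omega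
  have haodd : a % 2 = 1 := by
    rcases Int.even_or_odd a with ⟨k, rfl⟩ | ⟨k, hk⟩
    · exfalso
      obtain ⟨M₁, rfl⟩ := hM
      have h2 : (k+k)^2 - 1 = 2 * (M₁ * b^2) := by rw [h]; ring
      have hexp : (k+k)^2 = 4*k^2 := by ring
      omega
    · omega
  obtain ⟨k, hk⟩ : ∃ k, a = 2*k+1 := ⟨(a-1)/2, by omega⟩
  obtain ⟨b₁, hb₁⟩ : ∃ b₁, b = 2*b₁ := by
    rcases Int.even_or_odd b with ⟨b', rfl⟩ | ⟨b', hb'⟩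
    · exact ⟨b', by ring⟩
    · exfalso
      obtain ⟨M₁, rfl⟩ := hM
      have h2 : (2:ℤ) ∣ k^2 + k := by
        rcases Int.even_or_odd k with ⟨t, rfl⟩ | ⟨t, rfl⟩
        · exact ⟨2*t^2+t, by ring⟩
        · exact ⟨2*t^2+3*t+1, by ring⟩
      obtain ⟨t, ht⟩ := h2
      have h8 : a^2 - 1 = 8*t := by rw [hk]; linarith [ht]
      have hkey : 2*M₁*(2*b'+1)^2 = 8*(M₁*(b'^2+b')) + 2*M₁ := by ring
      have hh : 2*M₁*(2*b'+1)^2 = 8*t := by rw [← h8, h, hb']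
      omega
  subst hb₁
  rcases (by omega : a % 4 = 1 ∨ a % 4 = 3) with h4 | h4
  · left
    have e1 : a + 1 = 2*((a+1)/2) := by omega
    have e2 : (a+1)/2 % 2 = 1 := by omega
    exact keyB_aux M (a+1) b₁ ((a+1)/2) e1 e2
  · right
    have e1 : a - 1 = 2*((a-1)/2) := by omega
    have e2 : (a-1)/2 % 2 = 1 := by omega
    exact keyB_aux M (a-1) b₁ ((a-1)/2) e1 e2

/-- Reduction of the gcds through a common factor of 2. -/
lemma red2 (c b : ℤ) : (2*c) / (Int.gcd (2*c) (2*b) : ℤ) = c / (Int.gcd c b : ℤ) := by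
  have hgcd : Int.gcd (2*c) (2*b) = 2 * Int.gcd c b := by
    rw [Int.gcd_mul_left]; rfl
  rw [hgcd]
  push_cast
  exact Int.mul_ediv_mul_of_pos _ _ (by norm_num)

lemma Ksqrt_norm_eq (M : ℕ) (hM : 2 ≤ M) (hns : ¬ IsSquare M)
    [FiniteDimensional ℚ (Ksqrt M)] (x : Ksqrt M) (u v : ℤ)
    (hx : (x : ℝ) = (u + v * Real.sqrt M) / 2) :
    Algebra.norm ℚ x = ((u^2 - M * v^2 : ℤ) : ℚ) / 4 := by
  classical
  set s : ℝ := Real.sqrt M with hsdef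
  have hM0 : (0:ℝ) ≤ (M:ℝ) := by positivity
  have hs2 : s ^ 2 = (M:ℝ) := Real.sq_sqrt hM0
  have hirr : Irrational s := irrational_sqrt_natCast_iff.mpr hns
  have hint : IsIntegral ℚ s := by
    refine ⟨X ^ 2 - C (M:ℚ), monic_X_pow_sub_C _ (by norm_num), ?_⟩
    simp [hs2]
  have hnotmem : s ∉ (algebraMap ℚ ℝ).range := by
    rintro ⟨q, hq⟩
    exact hirr ⟨q, hq⟩
  have hd2 : (minpoly ℚ s).natDegree = 2 := by
    refine le_antisymm ?_ ((minpoly.two_le_natDegree_iff hint).mpr hnotmem)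
    have hle := minpoly.min ℚ s (monic_X_pow_sub_C (M:ℚ) (two_ne_zero))
      (by simp [hs2] : aeval s (X ^ 2 - C (M:ℚ)) = 0)
    have hnd : (X ^ 2 - C (M:ℚ)).natDegree = 2 := natDegree_X_pow_sub_C
    exact hnd ▸ Polynomial.natDegree_le_natDegree hle
  have hfr : Module.finrank ℚ (Ksqrt M) = 2 :=
    (IntermediateField.adjoin.finrank hint).trans hd2
  set sK : Ksqrt M := ⟨s, IntermediateField.mem_adjoin_simple_self ℚ s⟩ with hsK
  set ι : Ksqrt M →ₐ[ℚ] ℂ :=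
    (Complex.ofRealAm.restrictScalars ℚ).comp (Ksqrt M).val with hι
  have hcard : Fintype.card (Ksqrt M →ₐ[ℚ] ℂ) = 2 := by
    rw [AlgHom.card]; exact hfr
  obtain ⟨σ, hσ⟩ : ∃ σ : Ksqrt M →ₐ[ℚ] ℂ, σ ≠ ι :=
    Fintype.exists_ne_of_one_lt_card (by omega) ι
  have huniv : (Finset.univ : Finset (Ksqrt M →ₐ[ℚ] ℂ)) = {ι, σ} :=
    (Finset.eq_univ_of_card _ (by rw [Finset.card_pair (Ne.symm hσ), hcard])).symm
  have hprod : algebraMap ℚ ℂ (Algebra.norm ℚ x) = ι x * σ x := by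
    rw [Algebra.norm_eq_prod_embeddings, huniv, Finset.prod_pair (Ne.symm hσ)]
  have hsKR : ((sK : Ksqrt M) : ℝ) = s := rfl
  have hsq : sK ^ 2 = (M : Ksqrt M) := by
    apply Subtype.val_injective
    have h1 : ((sK ^ 2 : Ksqrt M) : ℝ) = s ^ 2 := by push_cast; ring
    have h2 : (((M : Ksqrt M) : Ksqrt M) : ℝ) = (M : ℝ) := by push_cast; ring
    rw [h1, h2, hs2]
  have hs2C : ((s:ℂ)) ^ 2 = (M : ℂ) := by
    rw [← Complex.ofReal_pow, hs2]
    push_cast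
    ring
  have hιs : ι sK = (s : ℂ) := rfl
  have hσs : σ sK = -(s : ℂ) := by
    have h1 : (σ sK) ^ 2 = ((s:ℂ)) ^ 2 := by
      rw [← map_pow, hsq, map_natCast, hs2C]
    have h2 : (σ sK - s) * (σ sK + s) = 0 := by linear_combination h1
    rcases mul_eq_zero.mp h2 with h | h
    · exfalso
      apply hσ
      have hgen : σ sK = ι sK := by rw [hιs, ← sub_eq_zero]; exact h
      exact PowerBasis.algHom_ext (IntermediateField.adjoin.powerBasis hint)
        (by rw [IntermediateField.adjoin.powerBasis_gen]; exact hgen)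
    · exact eq_neg_of_add_eq_zero_left h
  have hιx : ι x = ((u:ℂ) + v * (s:ℂ)) / 2 := by
    have : ι x = Complex.ofReal (x : ℝ) := rfl
    rw [this, hx]
    push_cast
    ring
  have hxK : x = ((u : Ksqrt M) + (v : Ksqrt M) * sK) / 2 := by
    apply Subtype.val_injective
    have : ((((u : Ksqrt M) + (v : Ksqrt M) * sK) / 2 : Ksqrt M) : ℝ)
        = ((u:ℝ) + v * s) / 2 := by
      show (Ksqrt M).val (((u : Ksqrt M) + (v : Ksqrt M) * sK) / 2) = ((u:ℝ) + v * s) / 2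
      rw [map_div₀, map_add, map_mul, map_intCast, map_intCast, map_ofNat]
      rfl
    rw [this, hx]
  have hσx : σ x = ((u:ℂ) - v * (s:ℂ)) / 2 := by
    rw [hxK, map_div₀, map_add, map_mul, map_intCast, map_intCast, map_ofNat, hσs]
    ring
  have final : algebraMap ℚ ℂ (Algebra.norm ℚ x)
      = algebraMap ℚ ℂ (((u^2 - M * v^2 : ℤ) : ℚ) / 4) := by
    rw [hprod, hιx, hσx]
    have hrhs : algebraMap ℚ ℂ (((u^2 - M * v^2 : ℤ) : ℚ) / 4)
        = ((u:ℂ)^2 - M * v^2) / 4 := by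
      rw [eq_ratCast]
      push_cast
      ring
    rw [hrhs]
    linear_combination (-(v:ℂ)^2/4) * hs2C
  exact (algebraMap ℚ ℂ).injective final

/-- For `M` even squarefree with `-1` a global norm from `K = ℚ(√M)`,
the fundamental unit has norm `N(ε_K) = -1` iff `m = 2` and `m' = 2`. -/
theorem stmt_1 (M : ℕ) (hM : 2 ≤ M) (hsf : Squarefree M)
    [FiniteDimensional ℚ (Ksqrt M)]
    (hglob : ∃ x : Ksqrt M, Algebra.norm ℚ x = -1)
    (ε : (𝓞 (Ksqrt M))ˣ) (hε : IsFundamentalUnit M ε)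
    (u v : ℤ) (hu : 0 < u) (hv : 0 < v) (hpar : u % 2 = v % 2)
    (huv : (((ε : 𝓞 (Ksqrt M)) : Ksqrt M) : ℝ) = (u + v * Real.sqrt M) / 2) (hMeven : Even M) :
    Algebra.norm ℚ ((ε : 𝓞 (Ksqrt M)) : Ksqrt M) = -1 ↔
      gcdm M u v = 2 ∧ gcdm' M u v = 2 := by
  have hns : ¬ IsSquare M := by
    rintro ⟨r, hr⟩
    have hr1 : IsUnit r := hsf r (hr ▸ dvd_refl _)
    rw [Nat.isUnit_iff] at hr1
    subst hr1
    omega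
  haveI : NumberField (Ksqrt M) := ⟨⟩
  set e : Ksqrt M := ((ε : 𝓞 (Ksqrt M)) : Ksqrt M) with he
  have hnorm : Algebra.norm ℚ e = ((u^2 - M * v^2 : ℤ) : ℚ) / 4 :=
    Ksqrt_norm_eq M hM hns e u v huv
  -- the norm of a unit is ±1
  have habs : |Algebra.norm ℚ e| = 1 := by
    have h1 := NumberField.isUnit_iff_norm.mp ε.isUnit
    rwa [RingOfIntegers.coe_norm] at h1
  have hpm : (u^2 - (M:ℤ) * v^2 = 4) ∨ (u^2 - (M:ℤ) * v^2 = -4) := by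
    rw [hnorm] at habs
    rcases abs_eq (by norm_num : (0:ℚ) ≤ 1) |>.mp habs with h | h
    · left
      have : ((u^2 - (M:ℤ) * v^2 : ℤ) : ℚ) = 4 := by
        field_simp at h
        push_cast
        exact_mod_cast h
      exact_mod_cast this
    · right
      have : ((u^2 - (M:ℤ) * v^2 : ℤ) : ℚ) = -4 := by
        field_simp at h
        push_cast
        exact_mod_cast h
      exact_mod_cast this
  -- u and v are both even
  obtain ⟨M₁, hM₁⟩ : ∃ M₁ : ℤ, (M:ℤ) = 2 * M₁ := by
    obtain ⟨t, ht⟩ := hMeven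
    exact ⟨t, by push_cast [ht]; ring⟩
  have hueven : u % 2 = 0 := by
    rcases Int.even_or_odd u with ⟨k, rfl⟩ | ⟨k, hk⟩
    · omega
    · exfalso
      have hsq : u^2 = 4*(k^2+k)+1 := by rw [hk]; ring
      have hMv : (M:ℤ)*v^2 = 2*(M₁*v^2) := by rw [hM₁]; ring
      rcases hpm with h | h <;> omega
  obtain ⟨a, rfl⟩ : ∃ a, u = 2*a := ⟨u/2, by omega⟩
  obtain ⟨b, rfl⟩ : ∃ b, v = 2*b := ⟨v/2, by omega⟩
  have ha : 0 < a := by omega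
  have hb : 0 < b := by omega
  have heq : a^2 - (M:ℤ)*b^2 = 1 ∨ a^2 - (M:ℤ)*b^2 = -1 := by
    rcases hpm with h | h
    · left
      have h4 : 4*(a^2 - (M:ℤ)*b^2) = 4*1 := by linear_combination h
      linarith
    · right
      have h4 : 4*(a^2 - (M:ℤ)*b^2) = 4*(-1) := by linear_combination h
      linarith
  -- reduce gcdm / gcdm' to the a, b level
  have hg1 : gcdm M (2*a) (2*b) = Int.gcd ((a+1) / (Int.gcd (a+1) b : ℤ)) (M:ℤ) := by
    unfold gcdm
    rw [show 2*a+2 = 2*(a+1) by ring, red2]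
  have hg2 : gcdm' M (2*a) (2*b) = Int.gcd ((a-1) / (Int.gcd (a-1) b : ℤ)) (M:ℤ) := by
    unfold gcdm'
    rw [show 2*a-2 = 2*(a-1) by ring, red2]
  have hM2 : (2:ℤ) ∣ (M:ℤ) := ⟨M₁, hM₁⟩
  have hM4 : ¬ ((4:ℤ) ∣ (M:ℤ)) := by
    intro h4
    have : (2*2 : ℕ) ∣ M := by exact_mod_cast h4
    exact absurd (Nat.isUnit_iff.mp (hsf 2 this)) (by norm_num)
  have hnormiff : Algebra.norm ℚ e = -1 ↔ a^2 - (M:ℤ)*b^2 = -1 := by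
    rw [hnorm]
    constructor
    · intro h
      rcases heq with h' | h'
      · exfalso
        have : (((2*a)^2 - (M:ℤ) * (2*b)^2 : ℤ) : ℚ) = -4 := by
          field_simp at h
          push_cast at h ⊢
          linarith [h]
        have h4 : (2*a)^2 - (M:ℤ) * (2*b)^2 = -4 := by exact_mod_cast this
        have : 4*(a^2 - (M:ℤ)*b^2) = 4*(-1) := by linear_combination h4
        omega
      · exact h'
    · intro h'
      have h4 : (2*a)^2 - (M:ℤ) * (2*b)^2 = -4 := by linear_combination 4*h'
      rw [show ((2*a)^2 - (M:ℤ) * (2*b)^2 : ℤ) = (-4 : ℤ) from h4]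
      norm_num
  rw [hnormiff, hg1, hg2]
  constructor
  · intro hneg
    have hMb : a^2 + 1 = (M:ℤ)*b^2 := by linarith [hneg]
    have haodd : a % 2 = 1 := by
      rcases Int.even_or_odd a with ⟨k, rfl⟩ | ⟨k, hk⟩
      · exfalso
        have h2 : (k+k)^2 + 1 = 2 * (M₁ * b^2) := by rw [hMb, hM₁]; ring
        have hexp : (k+k)^2 = 4*k^2 := by ring
        omega
      · omega
    constructor
    · exact keyF (M:ℤ) a b (a+1) (a-1) hM2 hMb hb (by ring) (by omega)
    · exact keyF (M:ℤ) a b (a-1) (a+1) hM2 hMb hb (by ring) (by omega)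
  · rintro ⟨h1, h2⟩
    rcases heq with h' | h'
    · exfalso
      have hMb : a^2 - 1 = (M:ℤ)*b^2 := by linarith [h']
      rcases keyB (M:ℤ) a b hM2 hM4 hMb ha hb with hc | hc
      · exact hc h1
      · exact hc h2
    · exact h'
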